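/- In the quantum cohomology ring QH*(Gr(l,l+k)) with n = l+k, the quantum product of the Schubert classes of the two rectangles (d^l) (l rows of length d) and (k^d) (d rows of length k), for 0 ≤ d ≤ min(l,k), equals q^d times the identity class: σ_{(d^l)} * σ_{(k^d)} = q^d. -/

import Mathlib

open YoungDiagram

namespace QCGrass

/-- The rectangular Young diagram with `m` rows of length `M`. -/
def rect (m M : ℕ) : YoungDiagram :=
  ⟨Finset.range m ×ˢ Finset.range M, by
    intro a b hba ha
    simp only [Finset.coe_product, Set.mem_prod, Finset.mem_coe, Finset.mem_range] at *
    exact ⟨lt_of_le_of_lt hba.1 ha.1, lt_of_le_of_lt hba.2 ha.2⟩⟩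

/-- The cells of the skew shape `nu / lam`. -/
def skewCells (lam nu : YoungDiagram) : Finset (ℕ × ℕ) := nu.cells \ lam.cells

/-- `T` is a Littlewood–Richardson skew tableau of shape `nu / lam` and content `mu`:
entries (valued in `{1, 2, …}`, with `0` meaning "no entry") are supported exactly on the
skew shape `nu / lam`, weakly increase along rows, strictly increase down columns, the number
of entries equal to `r + 1` is the `r`-th row length of `mu`, and the reverse reading word
(rows read right to left, top to bottom) is a lattice word. -/
def IsLRTableau (lam mu nu : YoungDiagram) (T : ℕ × ℕ → ℕ) : Prop :=
  lam ≤ nu ∧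
  (∀ p : ℕ × ℕ, 1 ≤ T p ↔ p ∈ skewCells lam nu) ∧
  (∀ i j j' : ℕ, j ≤ j' → (i, j) ∈ skewCells lam nu → (i, j') ∈ skewCells lam nu →
      T (i, j) ≤ T (i, j')) ∧
  (∀ i i' j : ℕ, i < i' → (i, j) ∈ skewCells lam nu → (i', j) ∈ skewCells lam nu →
      T (i, j) < T (i', j)) ∧
  (∀ r : ℕ, ((skewCells lam nu).filter (fun p => T p = r + 1)).card = mu.rowLen r) ∧
  (∀ i j r : ℕ,
      ((skewCells lam nu).filter
        (fun p => T p = r + 2 ∧ (p.1 < i ∨ (p.1 = i ∧ j ≤ p.2)))).card ≤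
      ((skewCells lam nu).filter
        (fun p => T p = r + 1 ∧ (p.1 < i ∨ (p.1 = i ∧ j ≤ p.2)))).card)

/-- The Littlewood–Richardson coefficient `c^nu_{lam, mu}`, defined as the number of
Littlewood–Richardson skew tableaux of shape `nu / lam` and content `mu`. -/
noncomputable def lrCoeff (lam mu nu : YoungDiagram) : ℕ :=
  Nat.card {T : ℕ × ℕ → ℕ // IsLRTableau lam mu nu T}

/-- The set of boxes (in `0`-indexed matrix coordinates) of `mu` rotated 180 degrees and
placed in the lower-right corner of the `l × k` rectangle. -/
def rotSet (l k : ℕ) (mu : YoungDiagram) : Set (ℕ × ℕ) :=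
  {p | p.1 < l ∧ p.2 < k ∧ k - mu.rowLen (l - 1 - p.1) ≤ p.2}

/-- Two boxes are adjacent when they share an edge. -/
def Adjacent (p q : ℕ × ℕ) : Prop :=
  (p.1 = q.1 ∧ (p.2 = q.2 + 1 ∨ q.2 = p.2 + 1)) ∨
  (p.2 = q.2 ∧ (p.1 = q.1 + 1 ∨ q.1 = p.1 + 1))

/-- `mu` is obtained from `lam` by removing a legal `n`-rim hook: `mu ⊆ lam` (so the removal
leaves a Young diagram), the removed set has `n` boxes, is edge-connected, and contains
no `2 × 2` square. -/
def IsRimHookRemoval (n : ℕ) (lam mu : YoungDiagram) : Prop :=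
  mu ≤ lam ∧ (skewCells mu lam).card = n ∧
  (∀ p ∈ skewCells mu lam, ∀ q ∈ skewCells mu lam,
    Relation.ReflTransGen
      (fun a b => a ∈ skewCells mu lam ∧ b ∈ skewCells mu lam ∧ Adjacent a b) p q) ∧
  ¬ ∃ i j : ℕ, (i, j) ∈ skewCells mu lam ∧ (i + 1, j) ∈ skewCells mu lam ∧
      (i, j + 1) ∈ skewCells mu lam ∧ (i + 1, j + 1) ∈ skewCells mu lam

/-- One legal `n`-rim hook removal step. -/
def RimStep (n : ℕ) (lam mu : YoungDiagram) : Prop := IsRimHookRemoval n lam mu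

/-- A diagram is an `n`-core when no legal `n`-rim hook can be removed from it. -/
def IsCore (n : ℕ) (t : YoungDiagram) : Prop := ¬ ∃ s, RimStep n t s

/-- `ReachesIn n m a b` : `b` is obtained from `a` by `m` successive legal `n`-rim hook
removals. -/
def ReachesIn (n : ℕ) : ℕ → YoungDiagram → YoungDiagram → Prop
  | 0 => fun a b => a = b
  | m + 1 => fun a b => ∃ c, RimStep n a c ∧ ReachesIn n m c b

/-- The width (number of occupied columns) of the strip removed in passing
from `lam` to `mu`. -/
def hookWidth (lam mu : YoungDiagram) : ℕ := ((skewCells mu lam).image Prod.snd).card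

/-- The height (number of occupied rows) of the strip removed in passing
from `lam` to `mu`. -/
def hookHeight (lam mu : YoungDiagram) : ℕ := ((skewCells mu lam).image Prod.fst).card

/-- `ReachesInSign n k m s a b` : `b` is obtained from `a` by `m` successive legal `n`-rim
hook removals, and `s = ∏ (-1)^(k - width(R_i))` over the removed hooks `R_i`. -/
def ReachesInSign (n k : ℕ) : ℕ → ℤ → YoungDiagram → YoungDiagram → Prop
  | 0 => fun s a b => a = b ∧ s = 1
  | m + 1 => fun s a b => ∃ c s', RimStep n a c ∧ ReachesInSign n k m s' c b ∧
      s = (-1) ^ (k - hookWidth a c) * s'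

/-- `diagLen lam` is the number of diagonal boxes of `lam`, i.e. the side length of the
largest square contained in `lam`. -/
def diagLen (lam : YoungDiagram) : ℕ := (lam.cells.filter fun p => p.1 = p.2).card

/-- A `d × d` square of boxes fits inside `lam ∩ rotate(mu)` within the `l × k` rectangle. -/
def SquareFits (l k : ℕ) (lam mu : YoungDiagram) (d : ℕ) : Prop :=
  ∃ i j : ℕ, ∀ i' j' : ℕ, i ≤ i' → i' < i + d → j ≤ j' → j' < j + d →
    (i', j') ∈ lam.cells ∧ (i', j') ∈ rotSet l k mu

/-- The triple product `σ_lam · σ_mu · σ_nu` is nonzero in `H^*(Gr(l, l+k))`: some `rho ⊆ l × k`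
has `c^rho_{lam,mu} ≠ 0` and `rho` is disjoint from `rotate(nu)`. -/
def TripleNonzero (l k : ℕ) (lam mu nu : YoungDiagram) : Prop :=
  ∃ rho, rho ≤ rect l k ∧ lrCoeff lam mu rho ≠ 0 ∧
    ∀ i, i < l → rho.rowLen i + nu.rowLen (l - 1 - i) ≤ k


/-! ### Basic utilities -/

open Finset

lemma nat_eq_of_lt_iff {A B : ℕ} (h : ∀ j, j < A ↔ j < B) : A = B := by
  rcases lt_trichotomy A B with hc | hc | hc
  · exact absurd ((h A).2 hc) (lt_irrefl A)
  · exact hc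
  · exact absurd ((h B).1 hc) (lt_irrefl B)

lemma mem_rect {m M i j : ℕ} : (i, j) ∈ rect m M ↔ i < m ∧ j < M := by
  show (i, j) ∈ (rect m M).cells ↔ _
  simp [rect, Finset.mem_product]

lemma rowLen_rect (m M i : ℕ) : (rect m M).rowLen i = if i < m then M else 0 := by
  apply nat_eq_of_lt_iff
  intro j
  rw [← YoungDiagram.mem_iff_lt_rowLen, mem_rect]
  split <;> omega

lemma rowLen_le_of_le {mu nu : YoungDiagram} (h : mu ≤ nu) (i : ℕ) :
    mu.rowLen i ≤ nu.rowLen i := by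
  by_contra hc
  push_neg at hc
  have h1 : (i, nu.rowLen i) ∈ mu := YoungDiagram.mem_iff_lt_rowLen.2 hc
  have h2 := YoungDiagram.mem_iff_lt_rowLen.1 (h h1)
  omega

lemma le_of_rowLen_le {mu nu : YoungDiagram} (h : ∀ i, mu.rowLen i ≤ nu.rowLen i) :
    mu ≤ nu := by
  intro p hp
  obtain ⟨i, j⟩ := p
  have := YoungDiagram.mem_iff_lt_rowLen.1 hp
  exact YoungDiagram.mem_iff_lt_rowLen.2 (lt_of_lt_of_le this (h i))

lemma yd_ext {mu nu : YoungDiagram} (h : mu.cells = nu.cells) : mu = nu := by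
  cases mu; cases nu; simpa using h

lemma rowLen_eq_zero_of_colLen {lam : YoungDiagram} {N i : ℕ} (hN : lam.colLen 0 ≤ N)
    (hi : N ≤ i) : lam.rowLen i = 0 := by
  by_contra hc
  have : (i, 0) ∈ lam := YoungDiagram.mem_iff_lt_rowLen.2 (by omega)
  have := YoungDiagram.mem_iff_lt_colLen.1 this
  omega

lemma colLen_le_of_le {mu nu : YoungDiagram} (h : mu ≤ nu) (j : ℕ) :
    mu.colLen j ≤ nu.colLen j := by
  by_contra hc
  push_neg at hc
  have h1 : (nu.colLen j, j) ∈ mu := YoungDiagram.mem_iff_lt_colLen.2 hc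
  have h2 := YoungDiagram.mem_iff_lt_colLen.1 (h h1)
  omega

lemma colLen_le_iff {lam : YoungDiagram} {N : ℕ} (h : ∀ i, N ≤ i → lam.rowLen i = 0) :
    lam.colLen 0 ≤ N := by
  by_contra hc
  push_neg at hc
  have h1 : (N, 0) ∈ lam := YoungDiagram.mem_iff_lt_colLen.2 hc
  have := YoungDiagram.mem_iff_lt_rowLen.1 h1
  rw [h N le_rfl] at this
  omega

/-! ### Skew cells -/

lemma mem_skew_iff {mu lam : YoungDiagram} {i j : ℕ} :
    (i, j) ∈ skewCells mu lam ↔ mu.rowLen i ≤ j ∧ j < lam.rowLen i := by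
  rw [skewCells, Finset.mem_sdiff, YoungDiagram.mem_cells, YoungDiagram.mem_cells,
    YoungDiagram.mem_iff_lt_rowLen, YoungDiagram.mem_iff_lt_rowLen]
  omega

lemma skew_row_filter_card (mu lam : YoungDiagram) (i : ℕ) :
    ((skewCells mu lam).filter (fun p => p.1 = i)).card = lam.rowLen i - mu.rowLen i := by
  have : ((skewCells mu lam).filter (fun p => p.1 = i)) =
      (Finset.Ico (mu.rowLen i) (lam.rowLen i)).image (fun j => (i, j)) := by
    ext ⟨a, b⟩
    simp only [Finset.mem_filter, Finset.mem_image, Finset.mem_Ico, Prod.mk.injEq]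
    constructor
    · rintro ⟨hm, rfl⟩
      exact ⟨b, ⟨(mem_skew_iff.1 hm).1, (mem_skew_iff.1 hm).2⟩, rfl, rfl⟩
    · rintro ⟨j, hj, rfl, rfl⟩
      exact ⟨mem_skew_iff.2 hj, rfl⟩
  rw [this, Finset.card_image_of_injective _ (fun a b hab => by simpa using hab),
    Nat.card_Ico]

lemma skew_card_eq_sum {mu lam : YoungDiagram} {r1 r2 : ℕ}
    (hrows : ∀ p ∈ skewCells mu lam, r1 ≤ p.1 ∧ p.1 ≤ r2) :
    (skewCells mu lam).card =
      ∑ i ∈ Finset.Icc r1 r2, (lam.rowLen i - mu.rowLen i) := by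
  rw [Finset.card_eq_sum_card_fiberwise (f := Prod.fst) (t := Finset.Icc r1 r2)
    (fun p hp => Finset.mem_Icc.2 (hrows p hp))]
  exact Finset.sum_congr rfl (fun i _ => skew_row_filter_card mu lam i)

lemma skew_telescope {mu lam : YoungDiagram} {r1 r2 : ℕ} (h12 : r1 ≤ r2)
    (hle : ∀ i, mu.rowLen i ≤ lam.rowLen i)
    (hstep : ∀ i, r1 ≤ i → i < r2 → mu.rowLen i + 1 = lam.rowLen (i + 1)) :
    mu.rowLen r2 + ∑ i ∈ Finset.Icc r1 r2, (lam.rowLen i - mu.rowLen i)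
      = lam.rowLen r1 + (r2 - r1) := by
  induction r2, h12 using Nat.le_induction with
  | base =>
    simp only [Finset.Icc_self, Finset.sum_singleton]
    have := hle r1; omega
  | succ m hm ih =>
    rw [Finset.sum_Icc_succ_top (by omega)]
    have ih' := ih (fun i h1 h2 => hstep i h1 (by omega))
    have h1 := hstep m hm (by omega)
    have h2 := hle (m + 1)
    omega
/-! ### Beta numbers -/

/-- The `i`-th beta number of `lam` relative to `N` beads. -/
def betaFn (N : ℕ) (lam : YoungDiagram) (i : ℕ) : ℕ := lam.rowLen i + (N - 1 - i)

/-- The beta set of `lam` with `N` beads. -/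
def betaSet (N : ℕ) (lam : YoungDiagram) : Finset ℕ :=
  (Finset.range N).image (betaFn N lam)

lemma betaFn_add {N : ℕ} (lam : YoungDiagram) {i i' : ℕ} (h : i ≤ i') (h' : i' < N) :
    betaFn N lam i' + (i' - i) ≤ betaFn N lam i := by
  have := lam.rowLen_anti i i' h
  unfold betaFn
  omega

lemma betaFn_lt {N : ℕ} (lam : YoungDiagram) {i i' : ℕ} (h : i < i') (h' : i' < N) :
    betaFn N lam i' < betaFn N lam i := by
  have := betaFn_add lam (le_of_lt h) h'
  omega

lemma betaFn_injOn {N : ℕ} (lam : YoungDiagram) {i i' : ℕ} (hi : i < N) (hi' : i' < N)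
    (h : betaFn N lam i = betaFn N lam i') : i = i' := by
  rcases lt_trichotomy i i' with hc | hc | hc
  · have := betaFn_lt lam hc hi'; omega
  · exact hc
  · have := betaFn_lt lam hc hi; omega

lemma mem_betaSet {N : ℕ} {lam : YoungDiagram} {x : ℕ} :
    x ∈ betaSet N lam ↔ ∃ i, i < N ∧ betaFn N lam i = x := by
  simp [betaSet, Finset.mem_image, Finset.mem_range]

lemma betaSet_eq_range_imp_bot {N : ℕ} {lam : YoungDiagram} (hN : 1 ≤ N)
    (h : betaSet N lam = Finset.range N) : lam = ⊥ := by
  have h0 : betaFn N lam 0 ∈ betaSet N lam := mem_betaSet.2 ⟨0, by omega, rfl⟩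
  rw [h, Finset.mem_range] at h0
  have hr0 : lam.rowLen 0 = 0 := by unfold betaFn at h0; omega
  apply yd_ext
  rw [YoungDiagram.cells_bot, Finset.eq_empty_iff_forall_notMem]
  rintro ⟨i, j⟩ hp
  rw [YoungDiagram.mem_cells] at hp
  have h1 := YoungDiagram.mem_iff_lt_rowLen.1 hp
  have h2 := lam.rowLen_anti 0 i (by omega)
  omega
/-! ### Crossing lemma from connectivity -/

lemma cross_of_path {θ : Finset (ℕ × ℕ)} {i : ℕ} {p q : ℕ × ℕ}
    (h : Relation.ReflTransGen (fun a b => a ∈ θ ∧ b ∈ θ ∧ Adjacent a b) p q)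
    (hq : i < q.1) : p.1 ≤ i → ∃ c, (i, c) ∈ θ ∧ (i + 1, c) ∈ θ := by
  induction h using Relation.ReflTransGen.head_induction_on with
  | refl => intro hp; omega
  | head hstep htail ih =>
    rename_i a c
    intro hp
    by_cases hc : c.1 ≤ i
    · exact ih hc
    · obtain ⟨ha, hcθ, hadj⟩ := hstep
      rcases hadj with ⟨h1, _⟩ | ⟨h1, h2⟩
      · omega
      · have hai : a.1 = i := by omega
        have hci : c.1 = i + 1 := by omega
        refine ⟨a.2, ?_, ?_⟩
        · rwa [show ((i : ℕ), a.2) = a from by rw [← hai]]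
        · rw [show ((i + 1 : ℕ), a.2) = c from by rw [← hci, h1]]
          exact hcθ
/-! ### Analysis of a rim hook removal via beta numbers -/

lemma rimhook_beta {n N : ℕ} {lam mu : YoungDiagram} (hn : n ≠ 0)
    (hrm : IsRimHookRemoval n lam mu) (hN : lam.colLen 0 ≤ N) :
    ∃ b, b ∈ betaSet N lam ∧ n ≤ b ∧ b - n ∉ betaSet N lam ∧
      betaSet N mu = insert (b - n) ((betaSet N lam).erase b) ∧
      hookWidth lam mu + ((betaSet N lam).filter (fun x => b - n < x ∧ x ≤ b)).card
        = n + 1 := by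
  obtain ⟨hle, hcard, hconn, h2x2⟩ := hrm
  set θ := skewCells mu lam with hθ
  have hrowle : ∀ i, mu.rowLen i ≤ lam.rowLen i := rowLen_le_of_le hle
  have hne : (θ.image Prod.fst).Nonempty := by
    rw [Finset.image_nonempty, ← Finset.card_pos, hcard]; omega
  set r1 := (θ.image Prod.fst).min' hne with hr1
  set r2 := (θ.image Prod.fst).max' hne with hr2
  have ha : ∀ p ∈ θ, r1 ≤ p.1 ∧ p.1 ≤ r2 := fun p hp =>
    ⟨Finset.min'_le _ _ (Finset.mem_image_of_mem _ hp),
     Finset.le_max' _ _ (Finset.mem_image_of_mem _ hp)⟩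
  obtain ⟨p1, hp1θ, hp11⟩ : ∃ p ∈ θ, p.1 = r1 := by
    have := (θ.image Prod.fst).min'_mem hne
    rw [Finset.mem_image] at this; obtain ⟨p, hp, he⟩ := this; exact ⟨p, hp, he⟩
  obtain ⟨p2, hp2θ, hp21⟩ : ∃ p ∈ θ, p.1 = r2 := by
    have := (θ.image Prod.fst).max'_mem hne
    rw [Finset.mem_image] at this; obtain ⟨p, hp, he⟩ := this; exact ⟨p, hp, he⟩
  have h12 : r1 ≤ r2 := by have := ha p1 hp1θ; omega
  have hcross : ∀ i, r1 ≤ i → i < r2 → ∃ c, (i, c) ∈ θ ∧ (i + 1, c) ∈ θ := by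
    intro i hi1 hi2
    exact cross_of_path (hconn p1 hp1θ p2 hp2θ) (by omega) (by omega)
  have hstep : ∀ i, r1 ≤ i → i < r2 → mu.rowLen i + 1 = lam.rowLen (i + 1) := by
    intro i hi1 hi2
    obtain ⟨c, hc1, hc2⟩ := hcross i hi1 hi2
    rw [hθ, mem_skew_iff] at hc1 hc2
    by_contra hne'
    have hlt : mu.rowLen i + 2 ≤ lam.rowLen (i + 1) := by omega
    apply h2x2
    refine ⟨i, mu.rowLen i, ?_, ?_, ?_, ?_⟩ <;> rw [hθ, mem_skew_iff]
    · have := lam.rowLen_anti i (i + 1) (by omega); omega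
    · have := mu.rowLen_anti i (i + 1) (by omega); omega
    · have := lam.rowLen_anti i (i + 1) (by omega); omega
    · have := mu.rowLen_anti i (i + 1) (by omega); omega
  have hout : ∀ i, i < r1 ∨ r2 < i → mu.rowLen i = lam.rowLen i := by
    intro i hi
    by_contra hne'
    have h1 : (i, mu.rowLen i) ∈ θ := by
      rw [hθ, mem_skew_iff]; have := hrowle i; omega
    have := ha _ h1; simp only at this; omega
  have hfr2 : mu.rowLen r2 < lam.rowLen r2 := by
    have h1 : (p2.1, p2.2) ∈ θ := by rwa [Prod.mk.eta]
    rw [hθ, mem_skew_iff] at h1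
    rw [← hp21]
    omega
  have hr2N : r2 < N := by
    by_contra hc
    have := rowLen_eq_zero_of_colLen hN (i := r2) (by omega)
    omega
  have hsum : n = ∑ i ∈ Finset.Icc r1 r2, (lam.rowLen i - mu.rowLen i) := by
    rw [← hcard, skew_card_eq_sum (fun p hp => ha p hp)]
  have htel := skew_telescope h12 hrowle hstep
  have key : n + mu.rowLen r2 = lam.rowLen r1 + (r2 - r1) := by omega
  refine ⟨betaFn N lam r1, mem_betaSet.2 ⟨r1, by omega, rfl⟩, ?_, ?_, ?_, ?_⟩
  · unfold betaFn; omega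
  · -- b - n not in beta set
    intro hmem
    obtain ⟨i0, hi0N, he⟩ := mem_betaSet.1 hmem
    have hbn : betaFn N lam r1 - n = mu.rowLen r2 + (N - 1 - r2) := by
      unfold betaFn; omega
    by_cases hc : i0 ≤ r2
    · have h1 := betaFn_add lam hc hr2N
      have h2 : betaFn N lam r2 = lam.rowLen r2 + (N - 1 - r2) := rfl
      omega
    · have h1 := betaFn_add lam (show r2 + 1 ≤ i0 by omega) hi0N
      have h2 : betaFn N lam (r2 + 1) = lam.rowLen (r2 + 1) + (N - 1 - (r2 + 1)) := rfl
      have h3 := hout (r2 + 1) (by omega)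
      have h4 := mu.rowLen_anti r2 (r2 + 1) (by omega)
      omega
  · -- beta set of mu
    have hbn : betaFn N lam r1 - n = mu.rowLen r2 + (N - 1 - r2) := by
      unfold betaFn; omega
    have hmur2 : betaFn N mu r2 = betaFn N lam r1 - n := by unfold betaFn; omega
    ext x
    simp only [Finset.mem_insert, Finset.mem_erase]
    constructor
    · intro hx
      obtain ⟨i, hiN, he⟩ := mem_betaSet.1 hx
      by_cases hc1 : i < r1 ∨ r2 < i
      · right
        have heq : betaFn N mu i = betaFn N lam i := by unfold betaFn; rw [hout i hc1]
        refine ⟨?_, mem_betaSet.2 ⟨i, hiN, by omega⟩⟩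
        intro hcon
        have hcc : betaFn N lam i = betaFn N lam r1 := by omega
        have : i = r1 := betaFn_injOn (N := N) lam hiN (by omega) hcc
        omega
      · push_neg at hc1
        by_cases hc2 : i = r2
        · left; rw [← he, hc2]; exact hmur2
        · right
          have hi2 : i < r2 := by omega
          have heq : betaFn N mu i = betaFn N lam (i + 1) := by
            have := hstep i (by omega) hi2
            unfold betaFn; omega
          refine ⟨?_, mem_betaSet.2 ⟨i + 1, by omega, by rw [heq] at he; exact he⟩⟩
          intro hcon
          have hcc : betaFn N lam (i + 1) = betaFn N lam r1 := by omega
          have : i + 1 = r1 := betaFn_injOn (N := N) lam (by omega) (by omega) hcc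
          omega
    · rintro (rfl | ⟨hxb, hx⟩)
      · exact mem_betaSet.2 ⟨r2, hr2N, hmur2⟩
      · obtain ⟨i, hiN, he⟩ := mem_betaSet.1 hx
        have hir1 : i ≠ r1 := by
          intro hcon; rw [hcon] at he; exact hxb he.symm
        by_cases hc1 : i < r1 ∨ r2 < i
        · have heq : betaFn N mu i = betaFn N lam i := by unfold betaFn; rw [hout i hc1]
          exact mem_betaSet.2 ⟨i, hiN, by omega⟩
        · push_neg at hc1
          have hi1 : r1 + 1 ≤ i := by omega
          have heq : betaFn N mu (i - 1) = betaFn N lam i := by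
            have := hstep (i - 1) (by omega) (by omega)
            have : mu.rowLen (i - 1) + 1 = lam.rowLen i := by
              rwa [show i - 1 + 1 = i from by omega] at this
            unfold betaFn; omega
          exact mem_betaSet.2 ⟨i - 1, by omega, by rw [heq]; exact he⟩
  · -- width + height count
    have hwidth : θ.image Prod.snd = Finset.Ico (mu.rowLen r2) (lam.rowLen r1) := by
      ext j
      simp only [Finset.mem_image, Finset.mem_Ico]
      constructor
      · rintro ⟨p, hp, rfl⟩
        have h1 := (mem_skew_iff (i := p.1) (j := p.2)).1 (by rwa [Prod.mk.eta])
        have h2 := ha p hp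
        have h3 := lam.rowLen_anti r1 p.1 (by omega)
        have h4 := mu.rowLen_anti p.1 r2 (by omega)
        omega
      · rintro ⟨hj1, hj2⟩
        have claim : ∀ s, s ≤ r2 - r1 → ∀ j, mu.rowLen r2 ≤ j →
            j < lam.rowLen (r2 - s) → ∃ p ∈ θ, Prod.snd p = j := by
          intro s
          induction s with
          | zero =>
            intro _ j hj1 hj2
            exact ⟨(r2, j), by rw [hθ, mem_skew_iff]; simpa using ⟨hj1, hj2⟩, rfl⟩
          | succ s ih =>
            intro hs j hj1 hj2
            by_cases hc : mu.rowLen (r2 - (s + 1)) ≤ j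
            · refine ⟨(r2 - (s + 1), j), ?_, rfl⟩
              rw [hθ, mem_skew_iff]; exact ⟨hc, hj2⟩
            · push_neg at hc
              have hst := hstep (r2 - (s + 1)) (by omega) (by omega)
              rw [show r2 - (s + 1) + 1 = r2 - s from by omega] at hst
              exact ih (by omega) j hj1 (by omega)
        obtain ⟨p, hp, he⟩ := claim (r2 - r1) le_rfl j hj1
          (by rwa [show r2 - (r2 - r1) = r1 from by omega])
        exact ⟨p, hp, he⟩
    have hfilter : (betaSet N lam).filter
        (fun x => betaFn N lam r1 - n < x ∧ x ≤ betaFn N lam r1)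
        = (Finset.Icc r1 r2).image (betaFn N lam) := by
      have hbn : betaFn N lam r1 - n = mu.rowLen r2 + (N - 1 - r2) := by
        unfold betaFn; omega
      ext x
      simp only [Finset.mem_filter, Finset.mem_image, Finset.mem_Icc]
      constructor
      · rintro ⟨hx, hx1, hx2⟩
        obtain ⟨i, hiN, rfl⟩ := mem_betaSet.1 hx
        refine ⟨i, ⟨?_, ?_⟩, rfl⟩
        · by_contra hc
          have := betaFn_lt (N := N) lam (show i < r1 from by omega) (by omega)
          omega
        · by_contra hc
          have h1 := betaFn_add lam (show r2 + 1 ≤ i from by omega) hiN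
          have h2 : betaFn N lam (r2 + 1) = lam.rowLen (r2 + 1) + (N - 1 - (r2 + 1)) := rfl
          have h3 := hout (r2 + 1) (by omega)
          have h4 := mu.rowLen_anti r2 (r2 + 1) (by omega)
          omega
      · rintro ⟨i, ⟨hi1, hi2⟩, rfl⟩
        refine ⟨mem_betaSet.2 ⟨i, by omega, rfl⟩, ?_, ?_⟩
        · have h1 := betaFn_add lam hi2 hr2N
          have h2 : betaFn N lam r2 = lam.rowLen r2 + (N - 1 - r2) := rfl
          omega
        · have := betaFn_add (N := N) lam hi1 (by omega)
          omega
    rw [hookWidth, ← hθ, hwidth, hfilter, Nat.card_Ico,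
      Finset.card_image_of_injOn (fun i hi i' hi' he =>
        betaFn_injOn lam (by simp only [Finset.mem_coe, Finset.mem_Icc] at hi; omega)
          (by simp only [Finset.mem_coe, Finset.mem_Icc] at hi'; omega) he),
      Nat.card_Icc]
    have := lam.rowLen_anti r1 r2 h12
    omega
/-! ### Constructing a rim hook removal from a beta move -/

/-- Young diagram from a row-length function. -/
def ofRowFn (f : ℕ → ℕ) (N M : ℕ) (hanti : ∀ i, f (i + 1) ≤ f i) : YoungDiagram :=
  ⟨(Finset.range N ×ˢ Finset.range M).filter (fun p => p.2 < f p.1), by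
    intro a b hba ha
    rw [Finset.mem_coe, Finset.mem_filter, Finset.mem_product, Finset.mem_range,
      Finset.mem_range] at *
    obtain ⟨⟨h1, h2⟩, h3⟩ := ha
    have hmono : ∀ i j : ℕ, i ≤ j → f j ≤ f i := fun i j h =>
      antitone_nat_of_succ_le hanti h
    have h4 := hmono b.1 a.1 hba.1
    have h5 := hba.2
    have hb1 := hba.1
    exact ⟨⟨by omega, by omega⟩, by omega⟩⟩

lemma mem_ofRowFn {f : ℕ → ℕ} {N M : ℕ} {hanti : ∀ i, f (i + 1) ≤ f i}
    (hN : ∀ i, N ≤ i → f i = 0) (hM : ∀ i, f i ≤ M) {i j : ℕ} :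
    (i, j) ∈ ofRowFn f N M hanti ↔ j < f i := by
  show (i, j) ∈ (ofRowFn f N M hanti).cells ↔ _
  simp only [ofRowFn, Finset.mem_filter, Finset.mem_product, Finset.mem_range]
  constructor
  · rintro ⟨_, h⟩; exact h
  · intro h
    have h1 : i < N := by
      by_contra hc
      rw [hN i (by omega)] at h; omega
    exact ⟨⟨h1, by have := hM i; omega⟩, h⟩

lemma adjacent_symm {p q : ℕ × ℕ} (h : Adjacent p q) : Adjacent q p := by
  unfold Adjacent at *
  omega

lemma beta_move_exists {n N : ℕ} {lam : YoungDiagram} (hn : n ≠ 0) (hN : lam.colLen 0 ≤ N)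
    {b : ℕ} (hb : b ∈ betaSet N lam) (hnb : n ≤ b) (hbn : b - n ∉ betaSet N lam) :
    ∃ mu, RimStep n lam mu := by
  obtain ⟨r1, hr1N, hbeq⟩ := mem_betaSet.1 hb
  have hFne : r1 ∈ (Finset.range N).filter (fun i => b - n < betaFn N lam i) := by
    rw [Finset.mem_filter, Finset.mem_range]
    exact ⟨hr1N, by omega⟩
  set r2 := ((Finset.range N).filter (fun i => b - n < betaFn N lam i)).max' ⟨r1, hFne⟩
    with hr2def
  have hr2mem := ((Finset.range N).filter (fun i => b - n < betaFn N lam i)).max'_mem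
    ⟨r1, hFne⟩
  rw [Finset.mem_filter, Finset.mem_range] at hr2mem
  obtain ⟨hr2N, hr2gt'⟩ := hr2mem
  have hr2gt : b - n < betaFn N lam r2 := hr2gt'
  have h12 : r1 ≤ r2 := Finset.le_max' _ _ hFne
  have hgt : ∀ i, r2 < i → i < N → betaFn N lam i < b - n := by
    intro i hi1 hi2
    have hnotmem : i ∉ (Finset.range N).filter (fun i => b - n < betaFn N lam i) := by
      intro hc
      have := Finset.le_max' _ _ hc
      omega
    rw [Finset.mem_filter, Finset.mem_range] at hnotmem
    push_neg at hnotmem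
    have hle' := hnotmem hi2
    have hne' : betaFn N lam i ≠ b - n := by
      intro hc
      exact hbn (mem_betaSet.2 ⟨i, hi2, hc⟩)
    omega
  have hge : N - 1 - r2 ≤ b - n := by
    by_cases hc : r2 + 1 < N
    · have h1 := hgt (r2 + 1) (by omega) hc
      have h2 : betaFn N lam (r2 + 1) = lam.rowLen (r2 + 1) + (N - 1 - (r2 + 1)) := rfl
      omega
    · omega
  set m2 := b - n - (N - 1 - r2) with hm2def
  have hm2 : m2 + (N - 1 - r2) = b - n := by omega
  have hA3 : b = lam.rowLen r1 + (N - 1 - r1) := hbeq.symm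
  have hA2 : lam.rowLen r2 + (N - 1 - r2) = betaFn N lam r2 := rfl
  have hlam2 : m2 < lam.rowLen r2 := by omega
  have hA6 : lam.rowLen (r2 + 1) ≤ m2 := by
    by_cases hc : r2 + 1 < N
    · have h1 := hgt (r2 + 1) (by omega) hc
      have h2 : betaFn N lam (r2 + 1) = lam.rowLen (r2 + 1) + (N - 1 - (r2 + 1)) := rfl
      omega
    · rw [rowLen_eq_zero_of_colLen hN (by omega)]; omega
  set f : ℕ → ℕ := fun j =>
    if j < r1 then lam.rowLen j else if j < r2 then lam.rowLen (j + 1) - 1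
    else if j = r2 then m2 else lam.rowLen j with hf
  have hf1 : ∀ j, j < r1 ∨ r2 < j → f j = lam.rowLen j := by
    intro j hj
    simp only [hf]
    split_ifs <;> omega
  have hf2 : ∀ j, r1 ≤ j → j < r2 → f j = lam.rowLen (j + 1) - 1 := by
    intro j hj1 hj2
    simp only [hf]
    split_ifs <;> omega
  have hf3 : f r2 = m2 := by
    simp only [hf]
    split_ifs <;> omega
  have hlamanti : ∀ i j : ℕ, i ≤ j → lam.rowLen j ≤ lam.rowLen i :=
    fun i j h => lam.rowLen_anti i j h
  have hposmid : ∀ j, r1 ≤ j → j < r2 → 1 ≤ lam.rowLen (j + 1) := by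
    intro j hj1 hj2
    have := hlamanti (j + 1) r2 (by omega)
    omega
  have hanti : ∀ i, f (i + 1) ≤ f i := by
    intro i
    rcases lt_trichotomy (i + 1) r1 with hc | hc | hc
    · rw [hf1 i (by omega), hf1 (i + 1) (by omega)]
      exact hlamanti i (i + 1) (by omega)
    · -- i + 1 = r1
      rw [hf1 i (by omega)]
      rcases eq_or_lt_of_le h12 with he | hlt
      · rw [show i + 1 = r2 from by omega, hf3]
        have := hlamanti i r2 (by omega)
        omega
      · rw [hf2 (i + 1) (by omega) (by omega)]
        have := hlamanti i (i + 1 + 1) (by omega)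
        omega
    · -- r1 ≤ i
      rcases lt_trichotomy (i + 1) r2 with hd | hd | hd
      · rw [hf2 i (by omega) (by omega), hf2 (i + 1) (by omega) hd]
        have := hlamanti (i + 1) (i + 1 + 1) (by omega)
        omega
      · have hpos := hposmid i (by omega) (by omega)
        rw [hf2 i (by omega) (by omega), show i + 1 = r2 from hd, hf3]
        rw [show i + 1 = r2 from hd] at hpos
        omega
      · rcases eq_or_lt_of_le (show r2 ≤ i from by omega) with he | he
        · rw [hf1 (i + 1) (by omega), ← he, hf3]
          exact hA6
        · rw [hf1 i (by omega), hf1 (i + 1) (by omega)]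
          exact hlamanti i (i + 1) (by omega)
  have hfle : ∀ i, f i ≤ lam.rowLen i := by
    intro i
    rcases lt_trichotomy i r1 with hc | hc | hc
    · rw [hf1 i (by omega)]
    · rcases eq_or_lt_of_le h12 with he | hlt
      · rw [hc, he, hf3]
        have := hlamanti r1 r2 h12
        omega
      · rw [hf2 i (by omega) (by omega)]
        have := hlamanti i (i + 1) (by omega)
        omega
    · rcases lt_trichotomy i r2 with hd | hd | hd
      · rw [hf2 i (by omega) hd]
        have := hlamanti i (i + 1) (by omega)
        omega
      · rw [hd, hf3]
        omega
      · rw [hf1 i (by omega)]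
  have hfzero : ∀ i, N ≤ i → f i = 0 := by
    intro i hi
    rw [hf1 i (by omega), rowLen_eq_zero_of_colLen hN hi]
  have hfM : ∀ i, f i ≤ lam.rowLen 0 := fun i => le_trans (hfle i) (hlamanti 0 i (by omega))
  set mu := ofRowFn f N (lam.rowLen 0) hanti with hmu
  have hmem : ∀ i j : ℕ, (i, j) ∈ mu ↔ j < f i := fun i j => mem_ofRowFn hfzero hfM
  have hmurow : ∀ i, mu.rowLen i = f i := by
    intro i
    apply nat_eq_of_lt_iff
    intro j
    rw [← YoungDiagram.mem_iff_lt_rowLen, hmem]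
  have hle : mu ≤ lam := le_of_rowLen_le (fun i => by rw [hmurow]; exact hfle i)
  have hmuanti : ∀ i j : ℕ, i ≤ j → mu.rowLen j ≤ mu.rowLen i :=
    fun i j h => mu.rowLen_anti i j h
  have hskew : ∀ i j : ℕ, (i, j) ∈ skewCells mu lam ↔ f i ≤ j ∧ j < lam.rowLen i := by
    intro i j
    rw [mem_skew_iff, hmurow]
  have hrows : ∀ p ∈ skewCells mu lam, r1 ≤ p.1 ∧ p.1 ≤ r2 := by
    rintro ⟨i, j⟩ hp
    rw [hskew] at hp
    by_contra hc
    rw [hf1 i (by omega)] at hp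
    omega
  have hstep : ∀ i, r1 ≤ i → i < r2 → mu.rowLen i + 1 = lam.rowLen (i + 1) := by
    intro i h1 h2
    rw [hmurow, hf2 i h1 h2]
    have := hposmid i h1 h2
    omega
  refine ⟨mu, hle, ?_, ?_, ?_⟩
  · -- cardinality
    rw [skew_card_eq_sum hrows]
    have htel := skew_telescope h12 (fun i => rowLen_le_of_le hle i) hstep
    rw [hmurow r2, hf3] at htel
    omega
  · -- connectivity
    set rel : ℕ × ℕ → ℕ × ℕ → Prop := fun a b =>
      a ∈ skewCells mu lam ∧ b ∈ skewCells mu lam ∧ Adjacent a b with hrel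
    have hrow : ∀ s i j, (i, j) ∈ skewCells mu lam → j = f i + s →
        Relation.ReflTransGen rel (i, j) (i, f i) := by
      intro s
      induction s with
      | zero =>
        intro i j hm he
        have hje : j = f i := by omega
        rw [hje]
      | succ s ih =>
        intro i j hm he
        have hm' : (i, j - 1) ∈ skewCells mu lam := by
          rw [hskew] at hm ⊢
          omega
        refine Relation.ReflTransGen.head ⟨hm, hm', Or.inl ⟨rfl, Or.inl (by omega)⟩⟩ ?_
        exact ih i (j - 1) hm' (by omega)
    have hrow' : ∀ i j, (i, j) ∈ skewCells mu lam →
        Relation.ReflTransGen rel (i, j) (i, f i) := by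
      intro i j hm
      have : f i ≤ j := ((hskew i j).1 hm).1
      exact hrow (j - f i) i j hm (by omega)
    have hdown : ∀ s i, i + s = r2 → r1 ≤ i →
        Relation.ReflTransGen rel (i, f i) (r2, f r2) := by
      intro s
      induction s with
      | zero => intro i he _; rw [show i = r2 from by omega]
      | succ s ih =>
        intro i he h1
        have hi2 : i < r2 := by omega
        have hv := hf2 i h1 hi2
        have hpos := hposmid i h1 hi2
        have hc1 : (i, f i) ∈ skewCells mu lam := by
          rw [hskew]
          have := hlamanti i (i + 1) (by omega)
          omega
        have hc2 : (i + 1, f i) ∈ skewCells mu lam := by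
          rw [hskew]
          have h3 : f (i + 1) ≤ f i := hanti i
          omega
        refine Relation.ReflTransGen.head ⟨hc1, hc2, Or.inr ⟨rfl, Or.inr rfl⟩⟩ ?_
        exact Relation.ReflTransGen.trans (hrow' (i + 1) (f i) hc2)
          (ih (i + 1) (by omega) (by omega))
    have hsymm : Symmetric rel := by
      rintro a b ⟨h1, h2, h3⟩
      exact ⟨h2, h1, adjacent_symm h3⟩
    intro p hp q hq
    have h1 : Relation.ReflTransGen rel p (r2, f r2) := by
      obtain ⟨i, j⟩ := p
      have := hrows _ hp
      exact Relation.ReflTransGen.trans (hrow' i j hp)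
        (hdown (r2 - i) i (by omega) (by simpa using this.1))
    have h2 : Relation.ReflTransGen rel q (r2, f r2) := by
      obtain ⟨i, j⟩ := q
      have := hrows _ hq
      exact Relation.ReflTransGen.trans (hrow' i j hq)
        (hdown (r2 - i) i (by omega) (by simpa using this.1))
    exact Relation.ReflTransGen.trans h1 ((@Relation.ReflTransGen.stdSymm _ rel ⟨fun a b h => hsymm h⟩).symm _ _ h2)
  · -- no 2x2
    rintro ⟨i, j, c1, c2, c3, c4⟩
    have e1 := hrows _ c1
    have e2 := hrows _ c2
    simp only at e1 e2
    have hi2 : i < r2 := by omega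
    have hv := hf2 i (by omega) hi2
    rw [hskew] at c1 c4
    have := hposmid i (by omega) hi2
    omega
/-! ### The abacus states occurring in the removal process -/

/-- Beta-set of the intermediate shapes: `A` records which hooks have been removed. -/
def stateSet (l k d : ℕ) (A : Finset ℕ) : Finset ℕ :=
  ((Finset.range d \ A).image (fun t => t + (l + k))) ∪ Finset.Ico d (d + l) ∪ A

lemma mem_stateSet {l k d : ℕ} {A : Finset ℕ} {x : ℕ} :
    x ∈ stateSet l k d A ↔
      (∃ t, (t < d ∧ t ∉ A) ∧ x = t + (l + k)) ∨ (d ≤ x ∧ x < d + l) ∨ x ∈ A := by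
  simp only [stateSet, Finset.mem_union, Finset.mem_image, Finset.mem_sdiff,
    Finset.mem_range, Finset.mem_Ico, or_assoc]
  constructor
  · rintro (⟨t, ⟨h1, h2⟩, h3⟩ | h | h)
    · exact Or.inl ⟨t, ⟨h1, h2⟩, h3.symm⟩
    · exact Or.inr (Or.inl h)
    · exact Or.inr (Or.inr h)
  · rintro (⟨t, ⟨h1, h2⟩, h3⟩ | h | h)
    · exact Or.inl ⟨t, ⟨h1, h2⟩, h3.symm⟩
    · exact Or.inr (Or.inl h)
    · exact Or.inr (Or.inr h)

section Rect

variable {l k d : ℕ}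

lemma rowLen_target (hdk : d ≤ k) (i : ℕ) :
    (rect d k ⊔ rect (d + l) d).rowLen i = if i < d then k else if i < d + l then d else 0 := by
  apply nat_eq_of_lt_iff
  intro j
  rw [← YoungDiagram.mem_iff_lt_rowLen, YoungDiagram.mem_sup, mem_rect, mem_rect]
  split_ifs <;> omega

lemma colLen_target (hdk : d ≤ k) : (rect d k ⊔ rect (d + l) d).colLen 0 ≤ d + l := by
  apply colLen_le_iff
  intro i hi
  rw [rowLen_target hdk]
  split_ifs <;> omega

lemma betaSet_target (hdk : d ≤ k) : betaSet (d + l) (rect d k ⊔ rect (d + l) d) = stateSet l k d ∅ := by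
  ext x
  rw [mem_betaSet, mem_stateSet]
  constructor
  · rintro ⟨i, hiN, rfl⟩
    have he : betaFn (d + l) (rect d k ⊔ rect (d + l) d) i
        = (if i < d then k else if i < d + l then d else 0) + (d + l - 1 - i) := by
      unfold betaFn; rw [rowLen_target hdk]
    by_cases hc : i < d
    · left
      refine ⟨d - 1 - i, ⟨by omega, Finset.notMem_empty _⟩, ?_⟩
      rw [he]; split_ifs <;> omega
    · right; left
      rw [he]; split_ifs <;> omega
  · have he : ∀ i, betaFn (d + l) (rect d k ⊔ rect (d + l) d) i
        = (if i < d then k else if i < d + l then d else 0) + (d + l - 1 - i) := by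
      intro i; unfold betaFn; rw [rowLen_target hdk]
    rintro (⟨t, ⟨h1, _⟩, rfl⟩ | ⟨h1, h2⟩ | h)
    · exact ⟨d - 1 - t, by omega, by rw [he]; split_ifs <;> omega⟩
    · exact ⟨2 * d + l - 1 - x, by omega, by rw [he]; split_ifs <;> omega⟩
    · exact absurd h (Finset.notMem_empty _)

lemma stateSet_full : stateSet l k d (Finset.range d) = Finset.range (d + l) := by
  ext x
  rw [mem_stateSet]
  simp only [Finset.mem_range]
  constructor
  · rintro (⟨t, ⟨g1, g2⟩, _⟩ | g | g) <;> omega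
  · intro hx
    by_cases hc : x < d
    · right; right; exact hc
    · right; left; omega

lemma stateSet_move (hdk : d ≤ k) {A : Finset ℕ} (hA : A ⊆ Finset.range d) {b : ℕ}
    (hb : b ∈ stateSet l k d A) (hnb : l + k ≤ b) (hout : b - (l + k) ∉ stateSet l k d A) :
    ∃ t, t < d ∧ t ∉ A ∧ b = t + (l + k) ∧
      insert (b - (l + k)) ((stateSet l k d A).erase b) = stateSet l k d (insert t A) ∧
      ((stateSet l k d A).filter (fun x => b - (l + k) < x ∧ x ≤ b)).card =
        l + 1 + ((Finset.range d \ A).filter (· < t)).card + (A.filter (t < ·)).card := by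
  have hdn : d ≤ l + k := by omega
  rcases mem_stateSet.1 hb with ⟨t, ⟨h1, h2⟩, rfl⟩ | ⟨h1, h2⟩ | h
  · refine ⟨t, h1, h2, rfl, ?_, ?_⟩
    · ext x
      simp only [Finset.mem_insert, Finset.mem_erase, mem_stateSet]
      have hne : t + (l + k) - (l + k) = t := by omega
      rw [hne]
      constructor
      · rintro (rfl | ⟨hxne, hx⟩)
        · right; right; exact Or.inl rfl
        · rcases hx with ⟨t', ⟨g1, g2⟩, rfl⟩ | g | g
          · left
            refine ⟨t', ⟨g1, ?_⟩, rfl⟩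
            push_neg
            exact ⟨by omega, g2⟩
          · right; left; exact g
          · right; right; exact Or.inr g
      · rintro (⟨t', ⟨g1, g2⟩, rfl⟩ | g | g)
        · push_neg at g2
          right
          exact ⟨by omega, Or.inl ⟨t', ⟨g1, g2.2⟩, rfl⟩⟩
        · right
          exact ⟨by omega, Or.inr (Or.inl g)⟩
        · rcases g with rfl | g'
          · left; rfl
          · right
            refine ⟨?_, Or.inr (Or.inr g')⟩
            have := hA g'
            rw [Finset.mem_range] at this
            omega
    · -- cardinality of the filter
      have hsplit : (stateSet l k d A).filter (fun x => t + (l + k) - (l + k) < x ∧ x ≤ t + (l + k))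
          = ((Finset.range d \ A).filter (· ≤ t)).image (fun s => s + (l + k))
            ∪ Finset.Ico d (d + l) ∪ A.filter (t < ·) := by
        ext x
        simp only [Finset.mem_filter, Finset.mem_union, Finset.mem_image, Finset.mem_sdiff,
          Finset.mem_range, Finset.mem_Ico, mem_stateSet]
        constructor
        · rintro ⟨(⟨t', ⟨g1, g2⟩, rfl⟩ | g | g), hx1, hx2⟩
          · exact Or.inl (Or.inl ⟨t', ⟨⟨g1, g2⟩, by omega⟩, rfl⟩)
          · exact Or.inl (Or.inr g)
          · refine Or.inr ⟨g, ?_⟩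
            have := hA g
            rw [Finset.mem_range] at this
            omega
        · rintro ((⟨t', ⟨⟨g1, g2⟩, g3⟩, rfl⟩ | g) | ⟨g, hg⟩)
          · exact ⟨Or.inl ⟨t', ⟨g1, g2⟩, rfl⟩, by omega, by omega⟩
          · exact ⟨Or.inr (Or.inl g), by omega, by omega⟩
          · have := hA g
            rw [Finset.mem_range] at this
            exact ⟨Or.inr (Or.inr g), by omega, by omega⟩
      rw [hsplit]
      have hd1 : Disjoint (((Finset.range d \ A).filter (· ≤ t)).image (fun s => s + (l + k)))
          (Finset.Ico d (d + l)) := by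
        rw [Finset.disjoint_left]
        rintro x hx hx'
        simp only [Finset.mem_image] at hx
        obtain ⟨s', _, rfl⟩ := hx
        rw [Finset.mem_Ico] at hx'
        omega
      have hd2 : Disjoint ((((Finset.range d \ A).filter (· ≤ t)).image (fun s => s + (l + k)))
          ∪ Finset.Ico d (d + l)) (A.filter (t < ·)) := by
        rw [Finset.disjoint_left]
        rintro x hx hx'
        rw [Finset.mem_filter] at hx'
        have := hA hx'.1
        rw [Finset.mem_range] at this
        rcases Finset.mem_union.1 hx with hx | hx
        · simp only [Finset.mem_image] at hx
          obtain ⟨s', _, rfl⟩ := hx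
          omega
        · rw [Finset.mem_Ico] at hx
          omega
      rw [Finset.card_union_of_disjoint hd2, Finset.card_union_of_disjoint hd1,
        Finset.card_image_of_injective _ (fun a b hab => by omega), Nat.card_Ico]
      have hfle : (Finset.range d \ A).filter (· ≤ t)
          = insert t ((Finset.range d \ A).filter (· < t)) := by
        ext s
        simp only [Finset.mem_insert, Finset.mem_filter, Finset.mem_sdiff, Finset.mem_range]
        constructor
        · rintro ⟨⟨g1, g2⟩, g3⟩
          rcases eq_or_lt_of_le g3 with rfl | g4
          · exact Or.inl rfl
          · exact Or.inr ⟨⟨g1, g2⟩, g4⟩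
        · rintro (rfl | ⟨⟨g1, g2⟩, g3⟩)
          · exact ⟨⟨h1, h2⟩, le_rfl⟩
          · exact ⟨⟨g1, g2⟩, by omega⟩
      rw [hfle, Finset.card_insert_of_notMem (by
        simp only [Finset.mem_filter, Finset.mem_sdiff, Finset.mem_range]
        rintro ⟨_, g⟩
        omega)]
      omega
  · omega
  · have := hA h
    rw [Finset.mem_range] at this
    omega

lemma stateSet_movable (hdk : d ≤ k) {A : Finset ℕ} (hA : A ⊆ Finset.range d) {t : ℕ} (ht : t < d)
    (htA : t ∉ A) :
    t + (l + k) ∈ stateSet l k d A ∧ l + k ≤ t + (l + k) ∧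
      t + (l + k) - (l + k) ∉ stateSet l k d A := by
  refine ⟨mem_stateSet.2 (Or.inl ⟨t, ⟨ht, htA⟩, rfl⟩), by omega, ?_⟩
  rw [show t + (l + k) - (l + k) = t from by omega, mem_stateSet]
  rintro (⟨t', ⟨g1, g2⟩, he⟩ | ⟨g1, g2⟩ | g)
  · omega
  · omega
  · exact htA g

lemma state_parity {A : Finset ℕ} (hA : A ⊆ Finset.range d) {t : ℕ} (ht : t < d)
    (htA : t ∉ A) :
    ∃ c : ℕ, ((Finset.range d \ A).filter (· < t)).card + (A.filter (t < ·)).card + 2 * c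
      = t + A.card := by
  refine ⟨(A.filter (· < t)).card, ?_⟩
  have h1 : (A.filter (· < t)).card + ((Finset.range d \ A).filter (· < t)).card
      = ((Finset.range d).filter (· < t)).card := by
    rw [← Finset.card_union_of_disjoint]
    · congr 1
      ext x
      simp only [Finset.mem_union, Finset.mem_filter, Finset.mem_sdiff, Finset.mem_range]
      constructor
      · rintro (⟨g1, g2⟩ | ⟨⟨g1, g2⟩, g3⟩)
        · have := hA g1
          rw [Finset.mem_range] at this
          exact ⟨this, g2⟩
        · exact ⟨g1, g3⟩
      · rintro ⟨g1, g2⟩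
        by_cases hc : x ∈ A
        · exact Or.inl ⟨hc, g2⟩
        · exact Or.inr ⟨⟨g1, hc⟩, g2⟩
    · rw [Finset.disjoint_left]
      rintro x hx hx'
      rw [Finset.mem_filter] at hx
      rw [Finset.mem_filter, Finset.mem_sdiff] at hx'
      exact hx'.1.2 hx.1
  have h2 : ((Finset.range d).filter (· < t)).card = t := by
    rw [show (Finset.range d).filter (· < t) = Finset.range t from by
      ext x
      simp only [Finset.mem_filter, Finset.mem_range]
      omega]
    exact Finset.card_range t
  have h3 : (A.filter (· < t)).card + (A.filter (t < ·)).card = A.card := by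
    rw [← Finset.card_union_of_disjoint]
    · congr 1
      ext x
      simp only [Finset.mem_union, Finset.mem_filter]
      constructor
      · rintro (⟨g1, _⟩ | ⟨g1, _⟩) <;> exact g1
      · intro hx
        rcases lt_trichotomy x t with hc | rfl | hc
        · exact Or.inl ⟨hx, hc⟩
        · exact absurd hx htA
        · exact Or.inr ⟨hx, hc⟩
    · rw [Finset.disjoint_left]
      rintro x hx hx'
      rw [Finset.mem_filter] at hx hx'
      omega
  omega

end Rect
/-! ### Main induction on rim hook removal sequences -/

lemma main_induction {l k d : ℕ} (hl : 1 ≤ l) (hdl : d ≤ l) (hdk : d ≤ k) :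
    ∀ (m : ℕ) (A : Finset ℕ), A ⊆ Finset.range d → ∀ (s : ℤ) (lam tau : YoungDiagram),
      lam.colLen 0 ≤ d + l → betaSet (d + l) lam = stateSet l k d A →
      ReachesInSign (l + k) k m s lam tau → IsCore (l + k) tau →
      tau = ⊥ ∧ m + A.card = d ∧
        s = (-1 : ℤ) ^ (∑ t ∈ Finset.range d \ A, t + ∑ j ∈ Finset.Ico A.card d, j) := by
  intro m
  induction m with
  | zero =>
    intro A hA s lam tau hcol hbeta hreach hcore
    obtain ⟨rfl, rfl⟩ := hreach
    have hAeq : A = Finset.range d := by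
      by_contra hne
      obtain ⟨t, htr, htA⟩ := Finset.exists_of_ssubset (lt_of_le_of_ne hA hne)
      rw [Finset.mem_range] at htr
      obtain ⟨hb, hnb, hbn⟩ := stateSet_movable hdk hA htr htA
      rw [← hbeta] at hb hbn
      obtain ⟨mu, hmu⟩ := beta_move_exists (n := l + k) (by omega) hcol hb hnb hbn
      exact hcore ⟨mu, hmu⟩
    subst hAeq
    rw [stateSet_full] at hbeta
    refine ⟨betaSet_eq_range_imp_bot (by omega) hbeta, by simp, ?_⟩
    rw [Finset.sdiff_self, Finset.card_range, Finset.Ico_self]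
    simp
  | succ m ih =>
    intro A hA s lam tau hcol hbeta hreach hcore
    obtain ⟨nu, s', hstep, hrest, hs⟩ := hreach
    obtain ⟨b, hbmem, hnb, hnotmem, hbetamu, hwc⟩ :=
      rimhook_beta (n := l + k) (N := d + l) (by omega) hstep hcol
    rw [hbeta] at hbmem hnotmem hbetamu hwc
    obtain ⟨t, ht, htA, hbeq, hinsert, hcount⟩ := stateSet_move hdk hA hbmem hnb hnotmem
    have hbeta' : betaSet (d + l) nu = stateSet l k d (insert t A) := by
      rw [hbetamu, hinsert]
    have hcol' : nu.colLen 0 ≤ d + l := le_trans (colLen_le_of_le hstep.1 0) hcol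
    have hAsub : insert t A ⊆ Finset.range d := by
      intro x hx
      rcases Finset.mem_insert.1 hx with rfl | hx'
      · exact Finset.mem_range.2 ht
      · exact hA hx'
    obtain ⟨htau, hm, hs'⟩ := ih (insert t A) hAsub s' nu tau hcol' hbeta' hrest hcore
    have hcardins : (insert t A).card = A.card + 1 := Finset.card_insert_of_notMem htA
    refine ⟨htau, by omega, ?_⟩
    -- sign computation
    set c1 := ((Finset.range d \ A).filter (· < t)).card with hc1
    set c2 := (A.filter (t < ·)).card with hc2
    have hkw : k - hookWidth lam nu = c1 + c2 := by
      rw [hcount] at hwc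
      omega
    obtain ⟨cc, hcc⟩ := state_parity hA ht htA
    have hsd : Finset.range d \ A = insert t (Finset.range d \ insert t A) := by
      ext x
      simp only [Finset.mem_insert, Finset.mem_sdiff, Finset.mem_range]
      constructor
      · rintro ⟨h1, h2⟩
        by_cases hc : x = t
        · exact Or.inl hc
        · exact Or.inr ⟨h1, by push_neg; exact ⟨hc, h2⟩⟩
      · rintro (rfl | ⟨h1, h2⟩)
        · exact ⟨ht, htA⟩
        · push_neg at h2
          exact ⟨h1, h2.2⟩
    have hsum1 : ∑ x ∈ Finset.range d \ A, x
        = t + ∑ x ∈ Finset.range d \ insert t A, x := by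
      rw [hsd, Finset.sum_insert (by simp)]
    have hsum2 : ∑ j ∈ Finset.Ico A.card d, j
        = A.card + ∑ j ∈ Finset.Ico (A.card + 1) d, j :=
      Finset.sum_eq_sum_Ico_succ_bot (by omega) _
    rw [hs, hs', hkw, hcardins]
    have hpar : ((-1 : ℤ)) ^ (c1 + c2) = (-1 : ℤ) ^ (t + A.card) := by
      rw [← hcc, pow_add ((-1 : ℤ)) (c1 + c2) (2 * cc), pow_mul]
      norm_num
    rw [hpar, ← pow_add]
    congr 1
    rw [hsum1, hsum2]
    omega
/-! ### Determination of the outer shape -/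

lemma col_chain {lam nu : YoungDiagram} {T : ℕ × ℕ → ℕ}
    (hstrict : ∀ i i' j : ℕ, i < i' → (i, j) ∈ skewCells lam nu →
      (i', j) ∈ skewCells lam nu → T (i, j) < T (i', j))
    {j i0 : ℕ} : ∀ s, (∀ i', i0 ≤ i' → i' ≤ i0 + s → (i', j) ∈ skewCells lam nu) →
      T (i0, j) + s ≤ T (i0 + s, j) := by
  intro s
  induction s with
  | zero => intro _; simp
  | succ s ih =>
    intro hmem
    have h1 := ih (fun i' h1 h2 => hmem i' h1 (by omega))
    have h2 := hstrict (i0 + s) (i0 + s + 1) j (by omega)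
      (hmem _ (by omega) (by omega)) (hmem _ (by omega) (by omega))
    have h3 : T (i0 + (s + 1), j) = T (i0 + s + 1, j) := rfl
    omega

lemma entry_le {lam nu : YoungDiagram} {d k : ℕ} {T : ℕ × ℕ → ℕ}
    (hsupp : ∀ p : ℕ × ℕ, 1 ≤ T p ↔ p ∈ skewCells lam nu)
    (hcount : ∀ r : ℕ, ((skewCells lam nu).filter (fun p => T p = r + 1)).card
      = (rect d k).rowLen r) :
    ∀ p ∈ skewCells lam nu, T p ≤ d := by
  intro p hp
  by_contra hc
  push_neg at hc
  have h2 := hcount (T p - 1)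
  rw [rowLen_rect] at h2
  have h3 : ¬ (T p - 1 < d) := by omega
  rw [if_neg h3] at h2
  have h4 : p ∈ (skewCells lam nu).filter (fun q => T q = (T p - 1) + 1) := by
    rw [Finset.mem_filter]
    have := (hsupp p).2 hp
    exact ⟨hp, by omega⟩
  have := Finset.card_pos.2 ⟨p, h4⟩
  omega

lemma rho_eq_target {l k d : ℕ} (hl : 1 ≤ l) (hdl : d ≤ l) (hdk : d ≤ k)
    {rho : YoungDiagram} {T : ℕ × ℕ → ℕ} (hrow : rho.rowLen 0 ≤ k)
    (hT : IsLRTableau (rect l d) (rect d k) rho T) :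
    rho = rect d k ⊔ rect (d + l) d := by
  obtain ⟨hle, hsupp, hrowwk, hcolstrict, hcount, hlat⟩ := hT
  have hTle := entry_le hsupp hcount
  have hApp1 : ∀ i, d ≤ i → rho.rowLen i ≤ d := by
    intro i hi
    by_contra hc
    push_neg at hc
    have hmem : ∀ i', i' ≤ i → (i', d) ∈ skewCells (rect l d) rho := by
      intro i' hi'
      rw [mem_skew_iff, rowLen_rect]
      have h1 := rho.rowLen_anti i' i hi'
      split_ifs <;> omega
    have h1 := col_chain hcolstrict (j := d) (i0 := 0) i (fun i' _ h2 => hmem i' (by omega))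
    rw [show 0 + i = i from by omega] at h1
    have h2 := (hsupp (0, d)).2 (hmem 0 (by omega))
    have h3 := hTle (i, d) (hmem i le_rfl)
    omega
  have hApp2 : ∀ i, l + d ≤ i → rho.rowLen i = 0 := by
    intro i hi
    rcases Nat.eq_zero_or_pos d with rfl | hd
    · have := hApp1 i (by omega); omega
    by_contra hc
    push_neg at hc
    have hmem : ∀ i', l ≤ i' → i' ≤ i → (i', 0) ∈ skewCells (rect l d) rho := by
      intro i' h1 h2
      rw [mem_skew_iff, rowLen_rect]
      have h3 := rho.rowLen_anti i' i h2
      split_ifs <;> omega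
    have h1 := col_chain hcolstrict (j := 0) (i0 := l) (i - l)
      (fun i' h2 h3 => hmem i' h2 (by omega))
    rw [show l + (i - l) = i from by omega] at h1
    have h2 := (hsupp (l, 0)).2 (hmem l le_rfl (by omega))
    have h3 := hTle (i, 0) (hmem i (by omega) le_rfl)
    omega
  have hsub : rho ≤ rect d k ⊔ rect (d + l) d := by
    apply le_of_rowLen_le
    intro i
    rw [rowLen_target hdk]
    split_ifs with h1 h2
    · exact le_trans (rho.rowLen_anti 0 i (by omega)) hrow
    · exact hApp1 i (by omega)
    · rw [hApp2 i (by omega)]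
  have hskewcard : (skewCells (rect l d) rho).card = d * k := by
    rw [Finset.card_eq_sum_card_fiberwise (f := fun p => T p - 1) (t := Finset.range d)
      (fun p hp => by
        rw [Finset.mem_coe, Finset.mem_range]
        show T p - 1 < d
        have h1 := (hsupp p).2 hp
        have h2 := hTle p hp
        omega)]
    have he : ∀ r ∈ Finset.range d,
        ((skewCells (rect l d) rho).filter (fun p => T p - 1 = r)).card = k := by
      intro r hr
      rw [Finset.mem_range] at hr
      have : (skewCells (rect l d) rho).filter (fun p => T p - 1 = r)
          = (skewCells (rect l d) rho).filter (fun p => T p = r + 1) := by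
        apply Finset.filter_congr
        intro p hp
        have := (hsupp p).2 hp
        omega
      rw [this, hcount r, rowLen_rect, if_pos hr]
    rw [Finset.sum_congr rfl he, Finset.sum_const, Finset.card_range, smul_eq_mul]
  have hcardrect : (rect l d).cells.card = l * d := by
    show (Finset.range l ×ˢ Finset.range d).card = l * d
    rw [Finset.card_product, Finset.card_range, Finset.card_range]
  have hsubcells : (rect l d).cells ⊆ rho.cells := YoungDiagram.cells_subset_iff.2 hle
  have hrhocard : rho.cells.card = d * k + l * d := by
    have := Finset.card_sdiff_of_subset hsubcells
    rw [← skewCells] at this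
    have h2 := Finset.card_le_card hsubcells
    omega
  have htargetcard : (rect d k ⊔ rect (d + l) d).cells.card = d * k + l * d := by
    rw [YoungDiagram.cells_sup]
    have hint : (rect d k).cells ∩ (rect (d + l) d).cells
        = Finset.range d ×ˢ Finset.range d := by
      ext ⟨i, j⟩
      rw [Finset.mem_inter, Finset.mem_product, Finset.mem_range, Finset.mem_range,
        YoungDiagram.mem_cells, YoungDiagram.mem_cells, mem_rect, mem_rect]
      omega
    have h1 := Finset.card_union_add_card_inter (rect d k).cells (rect (d + l) d).cells
    rw [hint] at h1
    have h2 : (rect d k).cells.card = d * k := by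
      show (Finset.range d ×ˢ Finset.range k).card = d * k
      rw [Finset.card_product, Finset.card_range, Finset.card_range]
    have h3 : (rect (d + l) d).cells.card = (d + l) * d := by
      show (Finset.range (d + l) ×ˢ Finset.range d).card = (d + l) * d
      rw [Finset.card_product, Finset.card_range, Finset.card_range]
    have h4 : (Finset.range d ×ˢ Finset.range d).card = d * d := by
      rw [Finset.card_product, Finset.card_range]
    have h5 : (d + l) * d = d * d + l * d := by ring
    omega
  apply yd_ext
  apply Finset.eq_of_subset_of_card_le (YoungDiagram.cells_subset_iff.2 hsub)
  omega
/-! ### The unique LR tableau -/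

/-- The canonical filling. -/
def canonF (l k d : ℕ) (i j : ℕ) : ℕ :=
  if i < d ∧ d ≤ j ∧ j < k then i + 1
  else if l ≤ i ∧ i < l + d ∧ j < d then i + 1 - l else 0

def canonT (l k d : ℕ) : ℕ × ℕ → ℕ := fun p => canonF l k d p.1 p.2

lemma mem_skew_target {l k d : ℕ} (hdl : d ≤ l) (hdk : d ≤ k) {i j : ℕ} :
    (i, j) ∈ skewCells (rect l d) (rect d k ⊔ rect (d + l) d) ↔
      (i < d ∧ d ≤ j ∧ j < k) ∨ (l ≤ i ∧ i < l + d ∧ j < d) := by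
  rw [mem_skew_iff, rowLen_rect, rowLen_target hdk]
  split_ifs <;> omega

lemma canonF_cases {l k d i j r : ℕ} (hv : canonF l k d i j = r + 2) :
    (i < d ∧ d ≤ j ∧ j < k ∧ i = r + 1) ∨ (l ≤ i ∧ i < l + d ∧ j < d ∧ i = l + r + 1) := by
  unfold canonF at hv
  by_cases h1 : i < d ∧ d ≤ j ∧ j < k
  · rw [if_pos h1] at hv; left; omega
  · rw [if_neg h1] at hv
    by_cases h2 : l ≤ i ∧ i < l + d ∧ j < d
    · rw [if_pos h2] at hv; right; omega
    · rw [if_neg h2] at hv; omega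

lemma lr_tableau_unique {l k d : ℕ} (hl : 1 ≤ l) (hdl : d ≤ l) (hdk : d ≤ k)
    {T : ℕ × ℕ → ℕ}
    (hT : IsLRTableau (rect l d) (rect d k) (rect d k ⊔ rect (d + l) d) T) :
    T = canonT l k d := by
  obtain ⟨hle, hsupp, hrowwk, hcolstrict, hcount, hlat⟩ := hT
  have hTle := entry_le hsupp hcount
  funext p
  obtain ⟨i, j⟩ := p
  by_cases hmem : (i, j) ∈ skewCells (rect l d) (rect d k ⊔ rect (d + l) d)
  · rcases (mem_skew_target hdl hdk).1 hmem with ⟨h1, h2, h3⟩ | ⟨h1, h2, h3⟩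
    · have hcells : ∀ i', i' < d →
          (i', j) ∈ skewCells (rect l d) (rect d k ⊔ rect (d + l) d) :=
        fun i' h => (mem_skew_target hdl hdk).2 (Or.inl ⟨h, h2, h3⟩)
      have hlow := col_chain hcolstrict (j := j) (i0 := 0) i
        (fun i' _ hh => hcells i' (by omega))
      rw [show (0 : ℕ) + i = i from by omega] at hlow
      have hup := col_chain hcolstrict (j := j) (i0 := i) (d - 1 - i)
        (fun i' hh1 hh2 => hcells i' (by omega))
      rw [show i + (d - 1 - i) = d - 1 from by omega] at hup
      have h4 := (hsupp (0, j)).2 (hcells 0 (by omega))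
      have h5 := hTle (d - 1, j) (hcells (d - 1) (by omega))
      have hR : canonT l k d (i, j) = i + 1 := by
        simp only [canonT, canonF]
        rw [if_pos (show i < d ∧ d ≤ j ∧ j < k from ⟨h1, h2, h3⟩)]
      rw [hR]
      omega
    · have hcells : ∀ i', l ≤ i' → i' < l + d →
          (i', j) ∈ skewCells (rect l d) (rect d k ⊔ rect (d + l) d) :=
        fun i' hh1 hh2 => (mem_skew_target hdl hdk).2 (Or.inr ⟨hh1, hh2, h3⟩)
      have hlow := col_chain hcolstrict (j := j) (i0 := l) (i - l)
        (fun i' hh1 hh2 => hcells i' hh1 (by omega))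
      rw [show l + (i - l) = i from by omega] at hlow
      have hup := col_chain hcolstrict (j := j) (i0 := i) (l + d - 1 - i)
        (fun i' hh1 hh2 => hcells i' (by omega) (by omega))
      rw [show i + (l + d - 1 - i) = l + d - 1 from by omega] at hup
      have h4 := (hsupp (l, j)).2 (hcells l le_rfl (by omega))
      have h5 := hTle (l + d - 1, j) (hcells (l + d - 1) (by omega) (by omega))
      have hR : canonT l k d (i, j) = i + 1 - l := by
        simp only [canonT, canonF]
        rw [if_neg (by omega), if_pos (show l ≤ i ∧ i < l + d ∧ j < d from ⟨h1, h2, h3⟩)]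
      rw [hR]
      omega
  · have h0 : ¬ 1 ≤ T (i, j) := fun hc => hmem ((hsupp _).1 hc)
    have hmem' := hmem
    rw [mem_skew_target hdl hdk] at hmem'
    have hR : canonT l k d (i, j) = 0 := by
      simp only [canonT, canonF]
      split_ifs <;> omega
    rw [hR]
    omega

lemma canonT_isLR {l k d : ℕ} (hl : 1 ≤ l) (hdl : d ≤ l) (hdk : d ≤ k) :
    IsLRTableau (rect l d) (rect d k) (rect d k ⊔ rect (d + l) d) (canonT l k d) := by
  refine ⟨?_, ?_, ?_, ?_, ?_, ?_⟩
  · apply le_of_rowLen_le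
    intro i
    rw [rowLen_rect, rowLen_target hdk]
    split_ifs <;> omega
  · rintro ⟨i, j⟩
    rw [mem_skew_target hdl hdk]
    simp only [canonT, canonF]
    split_ifs <;> omega
  · intro i j j' hjj hm hm'
    rw [mem_skew_target hdl hdk] at hm hm'
    simp only [canonT, canonF]
    split_ifs <;> omega
  · intro i i' j hii hm hm'
    rw [mem_skew_target hdl hdk] at hm hm'
    simp only [canonT, canonF]
    split_ifs <;> omega
  · intro r
    rw [rowLen_rect]
    by_cases hr : r < d
    · rw [if_pos hr]
      have hfe : (skewCells (rect l d) (rect d k ⊔ rect (d + l) d)).filter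
            (fun p => canonT l k d p = r + 1)
          = ({r} ×ˢ Finset.Ico d k) ∪ ({l + r} ×ˢ Finset.range d) := by
        ext ⟨i, j⟩
        rw [Finset.mem_filter, mem_skew_target hdl hdk]
        simp only [Finset.mem_union, Finset.mem_product, Finset.mem_singleton,
          Finset.mem_Ico, Finset.mem_range, canonT, canonF]
        split_ifs <;> omega
      rw [hfe, Finset.card_union_of_disjoint (by
        rw [Finset.disjoint_left]
        rintro ⟨i, j⟩ hx hx'
        simp only [Finset.mem_product, Finset.mem_singleton] at hx hx'
        omega)]
      rw [Finset.card_product, Finset.card_product, Finset.card_singleton,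
        Finset.card_singleton, Nat.card_Ico, Finset.card_range]
      omega
    · rw [if_neg hr]
      rw [Finset.card_eq_zero, Finset.eq_empty_iff_forall_notMem]
      rintro ⟨i, j⟩ hp
      rw [Finset.mem_filter] at hp
      obtain ⟨hm, hv⟩ := hp
      rw [mem_skew_target hdl hdk] at hm
      simp only [canonT, canonF] at hv
      split_ifs at hv <;> omega
  · intro i j r
    apply Finset.card_le_card_of_injOn (fun p => (p.1 - 1, p.2))
    · rintro ⟨a, c⟩ hp
      rw [Finset.mem_coe, Finset.mem_filter] at hp ⊢
      obtain ⟨hm, hv, hreg⟩ := hp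
      have hc := canonF_cases (show canonF l k d a c = r + 2 from hv)
      rcases hc with ⟨g1, g2, g3, g4⟩ | ⟨g1, g2, g3, g4⟩
      · refine ⟨(mem_skew_target hdl hdk).2 (Or.inl ⟨by omega, by omega, by omega⟩), ?_, ?_⟩
        · show canonF l k d (a - 1) c = r + 1
          unfold canonF
          rw [if_pos (show a - 1 < d ∧ d ≤ c ∧ c < k from ⟨by omega, by omega, by omega⟩)]
          omega
        · simp only at hreg ⊢
          omega
      · refine ⟨(mem_skew_target hdl hdk).2 (Or.inr ⟨by omega, by omega, by omega⟩), ?_, ?_⟩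
        · show canonF l k d (a - 1) c = r + 1
          unfold canonF
          rw [if_neg (by omega),
            if_pos (show l ≤ a - 1 ∧ a - 1 < l + d ∧ c < d from ⟨by omega, by omega, by omega⟩)]
          omega
        · simp only at hreg ⊢
          omega
    · rintro ⟨a, c⟩ hp ⟨a', c'⟩ hp' heq
      rw [Finset.mem_coe, Finset.mem_filter] at hp hp'
      obtain ⟨-, hv, -⟩ := hp
      obtain ⟨-, hv', -⟩ := hp'
      have hc := canonF_cases (show canonF l k d a c = r + 2 from hv)
      have hc' := canonF_cases (show canonF l k d a' c' = r + 2 from hv')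
      rw [Prod.mk.injEq] at heq ⊢
      obtain ⟨he1, he2⟩ := heq
      constructor
      · rcases hc with ⟨g1, g2, g3, g4⟩ | ⟨g1, g2, g3, g4⟩ <;>
          rcases hc' with ⟨f1, f2, f3, f4⟩ | ⟨f1, f2, f3, f4⟩ <;> omega
      · exact he2

lemma lrCoeff_target {l k d : ℕ} (hl : 1 ≤ l) (hdl : d ≤ l) (hdk : d ≤ k) :
    lrCoeff (rect l d) (rect d k) (rect d k ⊔ rect (d + l) d) = 1 := by
  rw [lrCoeff, Nat.card_eq_one_iff_unique]
  refine ⟨⟨fun T1 T2 => ?_⟩, ⟨⟨canonT l k d, canonT_isLR hl hdl hdk⟩⟩⟩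
  obtain ⟨T1, h1⟩ := T1
  obtain ⟨T2, h2⟩ := T2
  apply Subtype.ext
  show T1 = T2
  rw [lr_tableau_unique hl hdl hdk h1, lr_tableau_unique hl hdl hdk h2]
/-- In `QH^*(Gr(l, l+k))` with `n = l + k` and `0 ≤ d ≤ min(l,k)`, the quantum
product `σ_{(d^l)} * σ_{(k^d)}` equals `q^d`: via the rim hook rule, some `rho` with first
part `≤ k` has `c^rho_{(d^l),(k^d)} ≠ 0`, and every such `rho` has `c = 1`, empty `n`-core,
`d` removed rim hooks, and total sign `+1`. -/
theorem quantum_product_of_rectangles (l k d : ℕ) (hl : 1 ≤ l) (hk : 1 ≤ k)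
    (hdl : d ≤ l) (hdk : d ≤ k) :
    (∃ rho : YoungDiagram, rho.rowLen 0 ≤ k ∧ lrCoeff (rect l d) (rect d k) rho ≠ 0) ∧
    (∀ rho : YoungDiagram, rho.rowLen 0 ≤ k → lrCoeff (rect l d) (rect d k) rho ≠ 0 →
      lrCoeff (rect l d) (rect d k) rho = 1 ∧
      ∀ (m : ℕ) (s : ℤ) (tau : YoungDiagram),
        ReachesInSign (l + k) k m s rho tau → IsCore (l + k) tau →
        tau = ⊥ ∧ m = d ∧ s = 1) := by
  have hc1 : lrCoeff (rect l d) (rect d k) (rect d k ⊔ rect (d + l) d) = 1 :=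
    lrCoeff_target hl hdl hdk
  have htrow : (rect d k ⊔ rect (d + l) d).rowLen 0 ≤ k := by
    rw [rowLen_target hdk]
    split_ifs <;> omega
  constructor
  · exact ⟨rect d k ⊔ rect (d + l) d, htrow, by rw [hc1]; omega⟩
  · intro rho hrow hne
    have hnonempty : Nonempty {T // IsLRTableau (rect l d) (rect d k) rho T} := by
      by_contra hc
      rw [not_nonempty_iff] at hc
      exact hne (by rw [lrCoeff]; exact Nat.card_eq_zero.2 (Or.inl hc))
    obtain ⟨⟨T, hT⟩⟩ := hnonempty
    have hrho : rho = rect d k ⊔ rect (d + l) d := rho_eq_target hl hdl hdk hrow hT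
    refine ⟨by rw [hrho, hc1], ?_⟩
    intro m s tau hreach hcore
    have hcol : rho.colLen 0 ≤ d + l := by rw [hrho]; exact colLen_target hdk
    have hbeta : betaSet (d + l) rho = stateSet l k d ∅ := by
      rw [hrho]; exact betaSet_target hdk
    obtain ⟨h1, h2, h3⟩ := main_induction hl hdl hdk m ∅ (Finset.empty_subset _)
      s rho tau hcol hbeta hreach hcore
    rw [Finset.card_empty] at h2 h3
    refine ⟨h1, by omega, ?_⟩
    rw [h3, Finset.sdiff_empty]
    have he : ∑ t ∈ Finset.range d, t + ∑ j ∈ Finset.Ico 0 d, j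
        = 2 * ∑ t ∈ Finset.range d, t := by
      rw [← Finset.range_eq_Ico]
      omega
    rw [he, pow_mul]
    norm_num

end QCGrass
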